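/- Let I, X be sets and let A be the set of all functions ^IX → [0,1] where [0,1] carries the standard MV structure. With pointwise MV operations, substitutions s_τ p (x) = p(x ∘ τ) for τ ∈ ^II, and cylindrifications c_{(J)} p (x) = sup { p(y) : y agrees with x off J }, the resulting structure satisfies all axioms of a polyadic MV algebra (with G = ^II and T = ℘(I)). -/

import Mathlib

noncomputable section

/-- min(x+y,1) on [0,1]. -/
def uadd (a b : unitInterval) : unitInterval :=
  ⟨min ((a : ℝ) + b) 1, ⟨le_min (add_nonneg a.2.1 b.2.1) zero_le_one, min_le_right _ _⟩⟩

/-- max(x+y-1,0) on [0,1]. -/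
def umul (a b : unitInterval) : unitInterval :=
  ⟨max ((a : ℝ) + b - 1) 0, ⟨le_max_right _ _,
    max_le (by linarith [a.2.2, b.2.2]) zero_le_one⟩⟩

/-- 1 - x on [0,1]. -/
def uneg (a : unitInterval) : unitInterval :=
  ⟨1 - (a : ℝ), ⟨by linarith [a.2.2], by linarith [a.2.1]⟩⟩

variable {I X : Type*}

/-- Pointwise strong disjunction on [0,1]-valued functions. -/
def Fadd (p q : (I → X) → unitInterval) : (I → X) → unitInterval := fun x => uadd (p x) (q x)

/-- Pointwise strong conjunction. -/
def Fmul (p q : (I → X) → unitInterval) : (I → X) → unitInterval := fun x => umul (p x) (q x)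

/-- Pointwise negation. -/
def Fneg (p : (I → X) → unitInterval) : (I → X) → unitInterval := fun x => uneg (p x)

/-- Substitution: (s_τ p)(x) = p(x ∘ τ). -/
def Fs (τ : I → I) (p : (I → X) → unitInterval) : (I → X) → unitInterval :=
  fun x => p (x ∘ τ)

/-- Cylindrification: (c_(J) p)(x) = sup { p(y) : y ≡_J x }. -/
def Fc (J : Set I) (p : (I → X) → unitInterval) (x : I → X) : unitInterval :=
  ⟨sSup ((fun y => ((p y : ℝ))) '' {y | ∀ l ∉ J, y l = x l}),
    ⟨le_trans (p x).2.1 (le_csSup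
        ⟨1, fun z hz => by obtain ⟨y, -, rfl⟩ := hz; exact (p y).2.2⟩
        (Set.mem_image_of_mem _ (fun l _ => rfl))),
      csSup_le ⟨_, Set.mem_image_of_mem _ (fun l _ => rfl)⟩
        (fun z hz => by obtain ⟨y, -, rfl⟩ := hz; exact (p y).2.2)⟩⟩


section Aux
variable {I X : Type*}

/-- The set of points agreeing with `x` off `J`. -/
def Eset (J : Set I) (x : I → X) : Set (I → X) := {y | ∀ l ∉ J, y l = x l}

lemma mem_Eset_self (J : Set I) (x : I → X) : x ∈ Eset J x := fun _ _ => rfl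

lemma Eset_nonempty (J : Set I) (x : I → X) : (Eset J x).Nonempty := ⟨x, mem_Eset_self J x⟩

lemma bddAbove_img (p : (I → X) → unitInterval) (s : Set (I → X)) :
    BddAbove ((fun y => ((p y : ℝ))) '' s) :=
  ⟨1, fun z hz => by obtain ⟨y, -, rfl⟩ := hz; exact (p y).2.2⟩

lemma Fc_coe (J : Set I) (p : (I → X) → unitInterval) (x : I → X) :
    ((Fc J p x : ℝ)) = sSup ((fun y => ((p y : ℝ))) '' Eset J x) := rfl

lemma le_Fc {J : Set I} {p : (I → X) → unitInterval} {x y : I → X} (h : y ∈ Eset J x) :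
    (p y : ℝ) ≤ (Fc J p x : ℝ) :=
  le_csSup (bddAbove_img p _) (Set.mem_image_of_mem _ h)

lemma Fc_le {J : Set I} {p : (I → X) → unitInterval} {x : I → X} {c : ℝ}
    (h : ∀ y ∈ Eset J x, (p y : ℝ) ≤ c) : (Fc J p x : ℝ) ≤ c :=
  csSup_le ((Eset_nonempty J x).image _) (fun z hz => by
    obtain ⟨y, hy, rfl⟩ := hz; exact h y hy)

lemma Eset_congr {J : Set I} {x y : I → X} (h : y ∈ Eset J x) : Eset J y = Eset J x :=
  Set.ext fun z => forall_congr' fun l => forall_congr' fun hl => by rw [h l hl]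

lemma Fc_congr {J : Set I} (p : (I → X) → unitInterval) {x y : I → X} (h : y ∈ Eset J x) :
    Fc J p y = Fc J p x := by
  apply Subtype.ext
  rw [Fc_coe, Fc_coe, Eset_congr h]

/-- Pushing a monotone continuous map through the sup defining `Fc`. -/
lemma Fc_map {J : Set I} (p : (I → X) → unitInterval) (x : I → X) (g : ℝ → ℝ)
    (hm : Monotone g) (hc : Continuous g) :
    sSup ((fun y => g ((p y : ℝ))) '' Eset J x) = g ((Fc J p x : ℝ)) := by
  have h1 : (fun y => g ((p y : ℝ))) '' Eset J x
      = g '' ((fun y => ((p y : ℝ))) '' Eset J x) := by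
    rw [← Set.image_comp]; rfl
  rw [h1, Fc_coe,
    hm.map_csSup_of_continuousAt hc.continuousAt ((Eset_nonempty J x).image _)
      (bddAbove_img p _)]

end Aux

/-- The algebra of all [0,1]-valued functions on ^I X, with pointwise MV operations,
substitutions s_τ for all τ ∈ ^I I and cylindrifications c_(J) for all J ⊆ I,
satisfies all the axioms of a polyadic MV algebra (G = ^I I, T = ℘(I)). -/
theorem functional_polyadic_MV :
    (∀ (τ : I → I) (p q : (I → X) → unitInterval),
        Fs τ (Fadd p q) = Fadd (Fs τ p) (Fs τ q)) ∧
    (∀ (τ : I → I) (p q : (I → X) → unitInterval),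
        Fs τ (Fmul p q) = Fmul (Fs τ p) (Fs τ q)) ∧
    (∀ (τ : I → I) (p : (I → X) → unitInterval),
        Fs τ (Fneg p) = Fneg (Fs τ p)) ∧
    (∀ J : Set I, Fc (X := X) J (fun _ => 0) = fun _ => 0) ∧
    (∀ (J : Set I) (p : (I → X) → unitInterval), p ≤ Fc J p) ∧
    (∀ (J : Set I) (p q : (I → X) → unitInterval),
        Fc J (Fmul p (Fc J q)) = Fmul (Fc J p) (Fc J q)) ∧
    (∀ (J : Set I) (p q : (I → X) → unitInterval),
        Fc J (Fadd p (Fc J q)) = Fadd (Fc J p) (Fc J q)) ∧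
    (∀ (J : Set I) (p : (I → X) → unitInterval),
        Fc J (Fmul p p) = Fmul (Fc J p) (Fc J p)) ∧
    (∀ (J : Set I) (p : (I → X) → unitInterval),
        Fc J (Fadd p p) = Fadd (Fc J p) (Fc J p)) ∧
    (∀ p : (I → X) → unitInterval, Fs id p = p) ∧
    (∀ (σ τ : I → I) (p : (I → X) → unitInterval),
        Fs (σ ∘ τ) p = Fs σ (Fs τ p)) ∧
    (∀ (J J' : Set I) (p : (I → X) → unitInterval),
        Fc (J ∪ J') p = Fc J (Fc J' p)) ∧
    (∀ (σ τ : I → I) (J : Set I), (∀ k ∉ J, σ k = τ k) →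
        ∀ p : (I → X) → unitInterval, Fs σ (Fc J p) = Fs τ (Fc J p)) ∧
    (∀ (σ : I → I) (J : Set I), Set.InjOn σ (σ ⁻¹' J) →
        ∀ p : (I → X) → unitInterval, Fc J (Fs σ p) = Fs σ (Fc (σ ⁻¹' J) p)) := by
  classical
  constructor
  · intro τ p q; rfl
  constructor
  · intro τ p q; rfl
  constructor
  · intro τ p; rfl
  constructor
  · -- Fc J 0 = 0
    intro J
    funext x
    apply Subtype.ext
    rw [Fc_coe]
    have himg : (fun y => (((fun _ : I → X => (0 : unitInterval)) y : ℝ))) '' Eset J x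
        = {(0 : ℝ)} := by
      apply Set.eq_singleton_iff_nonempty_unique_mem.mpr
      refine ⟨(Eset_nonempty J x).image _, ?_⟩
      rintro z ⟨y, -, rfl⟩
      simp
    rw [himg, csSup_singleton]
    simp
  constructor
  · -- p ≤ Fc J p
    intro J p x
    exact Subtype.coe_le_coe.mp (le_Fc (mem_Eset_self J x))
  constructor
  · -- Fc J (p ⊙ Fc J q) = Fc J p ⊙ Fc J q
    intro J p q
    funext x
    apply Subtype.ext
    rw [Fc_coe]
    have hcong : ∀ y ∈ Eset J x,
        (((Fmul p (Fc J q)) y : ℝ)) = max ((p y : ℝ) + (Fc J q x : ℝ) - 1) 0 := by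
      intro y hy
      simp only [Fmul, umul, Fc_congr q hy]
    rw [Set.image_congr hcong]
    have := Fc_map (J := J) p x (fun t => max (t + (Fc J q x : ℝ) - 1) 0)
      (fun a b h => max_le_max (by linarith) le_rfl)
      (by continuity)
    exact this
  constructor
  · -- Fc J (p ⊕ Fc J q) = Fc J p ⊕ Fc J q
    intro J p q
    funext x
    apply Subtype.ext
    rw [Fc_coe]
    have hcong : ∀ y ∈ Eset J x,
        (((Fadd p (Fc J q)) y : ℝ)) = min ((p y : ℝ) + (Fc J q x : ℝ)) 1 := by
      intro y hy
      simp only [Fadd, uadd, Fc_congr q hy]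
    rw [Set.image_congr hcong]
    have := Fc_map (J := J) p x (fun t => min (t + (Fc J q x : ℝ)) 1)
      (fun a b h => min_le_min (by linarith) le_rfl)
      (by continuity)
    exact this
  constructor
  · -- Fc J (p ⊙ p) = Fc J p ⊙ Fc J p
    intro J p
    funext x
    apply Subtype.ext
    rw [Fc_coe]
    have hcong : ∀ y ∈ Eset J x,
        (((Fmul p p) y : ℝ)) = max ((p y : ℝ) + (p y : ℝ) - 1) 0 := by
      intro y hy; rfl
    rw [Set.image_congr hcong]
    have := Fc_map (J := J) p x (fun t => max (t + t - 1) 0)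
      (fun a b h => max_le_max (by linarith) le_rfl)
      (by continuity)
    exact this
  constructor
  · -- Fc J (p ⊕ p) = Fc J p ⊕ Fc J p
    intro J p
    funext x
    apply Subtype.ext
    rw [Fc_coe]
    have hcong : ∀ y ∈ Eset J x,
        (((Fadd p p) y : ℝ)) = min ((p y : ℝ) + (p y : ℝ)) 1 := by
      intro y hy; rfl
    rw [Set.image_congr hcong]
    have := Fc_map (J := J) p x (fun t => min (t + t) 1)
      (fun a b h => min_le_min (by linarith) le_rfl)
      (by continuity)
    exact this
  constructor
  · intro p; rfl
  constructor
  · intro σ τ p; rfl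
  constructor
  · -- Fc (J ∪ J') = Fc J ∘ Fc J'
    intro J J' p
    funext x
    apply Subtype.ext
    apply le_antisymm
    · apply Fc_le
      intro y hy
      set y' : I → X := fun l => if l ∈ J' then x l else y l with hy'
      have h1 : y' ∈ Eset J x := by
        intro l hl
        by_cases hJ' : l ∈ J'
        · simp [hy', hJ']
        · simp only [hy', if_neg hJ']
          exact hy l (fun h => h.elim hl hJ')
      have h2 : y ∈ Eset J' y' := by
        intro l hl
        simp [hy', hl]
      calc (p y : ℝ) ≤ (Fc J' p y' : ℝ) := le_Fc h2
        _ ≤ (Fc J (Fc J' p) x : ℝ) := le_Fc h1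
    · apply Fc_le
      intro y hy
      apply Fc_le
      intro z hz
      apply le_Fc
      intro l hl
      rw [hz l (fun h => hl (Or.inr h)), hy l (fun h => hl (Or.inl h))]
  constructor
  · -- s_σ c_(J) = s_τ c_(J) when σ = τ off J
    intro σ τ J h p
    funext x
    show Fc J p (x ∘ σ) = Fc J p (x ∘ τ)
    exact Fc_congr p (fun l hl => by simp [Function.comp, h l hl])
  · -- c_(J) s_σ = s_σ c_(σ⁻¹ J) when σ injective on σ⁻¹ J
    intro σ J hinj p
    funext x
    apply Subtype.ext
    apply le_antisymm
    · apply Fc_le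
      intro y hy
      show (p (y ∘ σ) : ℝ) ≤ (Fc (σ ⁻¹' J) p (x ∘ σ) : ℝ)
      apply le_Fc
      intro l hl
      exact hy (σ l) hl
    · show (Fc (σ ⁻¹' J) p (x ∘ σ) : ℝ) ≤ _
      apply Fc_le
      intro z hz
      classical
      set y : I → X := fun l =>
        if h : ∃ k, k ∈ σ ⁻¹' J ∧ σ k = l then z h.choose else x l with hydef
      have hyz : y ∘ σ = z := by
        funext k
        by_cases hk : k ∈ σ ⁻¹' J
        · have hex : ∃ k', k' ∈ σ ⁻¹' J ∧ σ k' = σ k := ⟨k, hk, rfl⟩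
          have := hex.choose_spec
          have hkk : hex.choose = k := hinj this.1 hk this.2
          simp only [Function.comp, hydef, dif_pos hex]
          rw [hkk]
        · have hex : ¬ ∃ k', k' ∈ σ ⁻¹' J ∧ σ k' = σ k := by
            rintro ⟨k', hk', hkk'⟩
            exact hk (by simpa [Set.mem_preimage, ← hkk'] using hk')
          simp only [Function.comp, hydef, dif_neg hex]
          exact (hz k hk).symm
      have hyx : y ∈ Eset J x := by
        intro l hl
        have hex : ¬ ∃ k, k ∈ σ ⁻¹' J ∧ σ k = l := by
          rintro ⟨k, hk, rfl⟩
          exact hl hk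
        show (if h : ∃ k, k ∈ σ ⁻¹' J ∧ σ k = l then z h.choose else x l) = x l
        exact dif_neg hex
      calc (p z : ℝ) = (p (y ∘ σ) : ℝ) := by rw [hyz]
        _ = ((Fs σ p) y : ℝ) := rfl
        _ ≤ _ := le_Fc hyx
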